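/- Let $\mathcal{M} = (\mathcal{S}, \mathcal{A}, \mathcal{P}, c, \gamma)$ be a finite discounted MDP with costs $c(s,a) \in [0,1]$ and $\gamma \in (0,1)$. Suppose the Markov chain on state-action pairs induced by a policy $\pi$ is geometrically mixing with constants $(C, \rho)$, and let $\hat{Q}^\pi(s,a)$ be the on-policy Monte Carlo estimator defined as the discounted cost sum $\sum_{t=\tau(z)}^{n-1} \gamma^{t - \tau(z)} c(S_t, A_t)$ if the truncated hitting time $\tau(z)$ of $z = (s,a)$ satisfies $\tau(z) \le n-1$, and $0$ otherwise. Then for any $z$ with stationary probability $\sigma^\pi(z) > 0$ and $t_{\mathrm{mix}}(z) = \lceil \log_\rho(\sigma^\pi(z)/(2C)) \rceil$, the bias satisfies $|\mathbb{E}[\hat{Q}^\pi(s,a)] - Q^\pi(s,a)| \le \frac{2(n+1)}{1-\gamma}\left[\gamma^{n-1} + \left(1 - \frac{\sigma^\pi(z)}{2 t_{\mathrm{mix}}(z)}\right)^{n-1}\right]$. -/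

import Mathlib

open Finset

/-- `t`-step transition probabilities of a finite Markov chain with kernel `K`. -/
noncomputable def kpow {Z : Type*} [Fintype Z] [DecidableEq Z]
    (K : Z → Z → ℝ) : ℕ → Z → Z → ℝ
  | 0, z0, z' => if z0 = z' then 1 else 0
  | t + 1, z0, z' => ∑ u, K z0 u * kpow K t u z'

/-- `hitProb K z i z0` is the probability that the chain started at `z0` visits `z`
for the first time at time `i`. -/
noncomputable def hitProb {Z : Type*} [Fintype Z] [DecidableEq Z]
    (K : Z → Z → ℝ) (z : Z) : ℕ → Z → ℝ
  | 0, z0 => if z0 = z then 1 else 0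
  | i + 1, z0 => if z0 = z then 0 else ∑ u, K z0 u * hitProb K z i u

section aux

variable {Z : Type*} [Fintype Z] [DecidableEq Z] {K : Z → Z → ℝ} {z : Z}

lemma kpow_nonneg (hK0 : ∀ z w, 0 ≤ K z w) :
    ∀ (t : ℕ) (z0 z' : Z), 0 ≤ kpow K t z0 z'
  | 0, z0, z' => by simp only [kpow]; split <;> norm_num
  | t + 1, z0, z' => Finset.sum_nonneg fun u _ =>
      mul_nonneg (hK0 _ _) (kpow_nonneg hK0 t u z')

lemma kpow_rowsum (hK1 : ∀ z, ∑ w, K z w = 1) :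
    ∀ (t : ℕ) (z0 : Z), ∑ z', kpow K t z0 z' = 1
  | 0, z0 => by simp [kpow]
  | t + 1, z0 => by
    simp only [kpow]
    rw [Finset.sum_comm]
    rw [show (∑ u, ∑ z', K z0 u * kpow K t u z') = ∑ u, K z0 u from
      Finset.sum_congr rfl fun u _ => by
        rw [← Finset.mul_sum, kpow_rowsum hK1 t u, mul_one]]
    exact hK1 z0

lemma kpow_le_one (hK0 : ∀ z w, 0 ≤ K z w) (hK1 : ∀ z, ∑ w, K z w = 1)
    (t : ℕ) (z0 z' : Z) : kpow K t z0 z' ≤ 1 := by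
  calc kpow K t z0 z' ≤ ∑ w, kpow K t z0 w :=
        Finset.single_le_sum (fun w _ => kpow_nonneg hK0 t z0 w) (Finset.mem_univ z')
    _ = 1 := kpow_rowsum hK1 t z0

lemma hitProb_nonneg (hK0 : ∀ z w, 0 ≤ K z w) :
    ∀ (i : ℕ) (z0 : Z), 0 ≤ hitProb K z i z0
  | 0, z0 => by simp only [hitProb]; split <;> norm_num
  | i + 1, z0 => by
    simp only [hitProb]
    split
    · norm_num
    · exact Finset.sum_nonneg fun u _ => mul_nonneg (hK0 _ _) (hitProb_nonneg hK0 i u)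

lemma hitF_self (k : ℕ) (hk : 1 ≤ k) : ∑ j ∈ range k, hitProb K z j z = 1 := by
  cases k with
  | zero => omega
  | succ k =>
    rw [Finset.sum_range_succ']
    simp [hitProb]

lemma hitF_succ (k : ℕ) {z0 : Z} (h : z0 ≠ z) :
    ∑ j ∈ range (k + 1), hitProb K z j z0
      = ∑ u, K z0 u * ∑ j ∈ range k, hitProb K z j u := by
  rw [Finset.sum_range_succ']
  have h0 : hitProb K z 0 z0 = 0 := by simp [hitProb, h]
  have hs : ∀ j, hitProb K z (j + 1) z0 = ∑ u, K z0 u * hitProb K z j u := by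
    intro j; simp [hitProb, h]
  simp_rw [hs, h0, add_zero]
  rw [Finset.sum_comm]
  simp_rw [← Finset.mul_sum]

lemma hitF_le_one (hK0 : ∀ z w, 0 ≤ K z w) (hK1 : ∀ z, ∑ w, K z w = 1) :
    ∀ (k : ℕ) (z0 : Z), ∑ j ∈ range k, hitProb K z j z0 ≤ 1
  | 0, z0 => by simp
  | k + 1, z0 => by
    by_cases h : z0 = z
    · subst h
      exact le_of_eq (hitF_self (k + 1) (by omega))
    · rw [hitF_succ k h]
      calc ∑ u, K z0 u * ∑ j ∈ range k, hitProb K z j u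
          ≤ ∑ u, K z0 u * 1 := Finset.sum_le_sum fun u _ =>
            mul_le_mul_of_nonneg_left (hitF_le_one hK0 hK1 k u) (hK0 _ _)
        _ = 1 := by simpa using hK1 z0

lemma kpow_hitF_le (hK0 : ∀ z w, 0 ≤ K z w) (hK1 : ∀ z, ∑ w, K z w = 1) :
    ∀ (m k : ℕ) (z0 : Z),
      ∑ u, kpow K m z0 u * ∑ j ∈ range k, hitProb K z j u
        ≤ ∑ j ∈ range (m + k), hitProb K z j z0
  | 0, k, z0 => by
    simp only [kpow, zero_add, ite_mul, one_mul, zero_mul]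
    rw [Finset.sum_ite_eq]
    simp
  | m + 1, k, z0 => by
    by_cases h : z0 = z
    · subst h
      calc ∑ u, kpow K (m + 1) z0 u * ∑ j ∈ range k, hitProb K z0 j u
          ≤ ∑ u, kpow K (m + 1) z0 u * 1 := Finset.sum_le_sum fun u _ =>
            mul_le_mul_of_nonneg_left (hitF_le_one hK0 hK1 k u) (kpow_nonneg hK0 _ _ _)
        _ = 1 := by
            simp only [mul_one]; exact kpow_rowsum hK1 (m + 1) z0
        _ = ∑ j ∈ range (m + 1 + k), hitProb K z0 j z0 := (hitF_self _ (by omega)).symm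
    · have expand : ∀ u, kpow K (m + 1) z0 u = ∑ v, K z0 v * kpow K m v u := fun u => rfl
      calc ∑ u, kpow K (m + 1) z0 u * ∑ j ∈ range k, hitProb K z j u
          = ∑ v, K z0 v * ∑ u, kpow K m v u * ∑ j ∈ range k, hitProb K z j u := by
            simp_rw [expand, Finset.sum_mul]
            rw [Finset.sum_comm]
            simp_rw [mul_assoc, ← Finset.mul_sum]
        _ ≤ ∑ v, K z0 v * ∑ j ∈ range (m + k), hitProb K z j v :=
            Finset.sum_le_sum fun v _ =>
              mul_le_mul_of_nonneg_left (kpow_hitF_le hK0 hK1 m k v) (hK0 _ _)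
        _ = ∑ j ∈ range (m + 1 + k), hitProb K z j z0 := by
            rw [show m + 1 + k = (m + k) + 1 by omega, hitF_succ _ h]

lemma tail_decay (hK0 : ∀ z w, 0 ≤ K z w) (hK1 : ∀ z, ∑ w, K z w = 1)
    (mxt : ℕ) {δ : ℝ} (hδ0 : 0 ≤ δ)
    (hmin : ∀ z0 : Z, δ ≤ kpow K mxt z0 z) :
    ∀ (q : ℕ) (z0 : Z),
      1 - ∑ j ∈ range (q * mxt + 1), hitProb K z j z0 ≤ (1 - δ) ^ q
  | 0, z0 => by
    have h := Finset.sum_nonneg fun j (_ : j ∈ range (0 * mxt + 1)) =>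
      hitProb_nonneg (z := z) hK0 j z0
    simp only [pow_zero]
    linarith
  | q + 1, z0 => by
    have hδ1 : δ ≤ 1 := le_trans (hmin z0) (kpow_le_one hK0 hK1 mxt z0 z)
    have hpq : (0:ℝ) ≤ (1 - δ) ^ q := pow_nonneg (by linarith) q
    have hidx : (q + 1) * mxt + 1 = mxt + (q * mxt + 1) := by ring
    have key := kpow_hitF_le (z := z) hK0 hK1 mxt (q * mxt + 1) z0
    have step1 : 1 - ∑ j ∈ range ((q + 1) * mxt + 1), hitProb K z j z0
        ≤ ∑ u, kpow K mxt z0 u * (1 - ∑ j ∈ range (q * mxt + 1), hitProb K z j u) := by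
      rw [hidx]
      have expand : ∑ u, kpow K mxt z0 u * (1 - ∑ j ∈ range (q * mxt + 1), hitProb K z j u)
          = 1 - ∑ u, kpow K mxt z0 u * ∑ j ∈ range (q * mxt + 1), hitProb K z j u := by
        simp only [mul_sub, mul_one, Finset.sum_sub_distrib, kpow_rowsum hK1]
      rw [expand]
      linarith
    have step2 : ∑ u, kpow K mxt z0 u * (1 - ∑ j ∈ range (q * mxt + 1), hitProb K z j u)
        ≤ ∑ u, kpow K mxt z0 u * (if u = z then 0 else (1 - δ) ^ q) := by
      apply Finset.sum_le_sum
      intro u _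
      apply mul_le_mul_of_nonneg_left _ (kpow_nonneg hK0 _ _ _)
      by_cases hu : u = z
      · subst hu
        rw [if_pos rfl, hitF_self _ (by omega)]
        norm_num
      · rw [if_neg hu]
        exact tail_decay hK0 hK1 mxt hδ0 hmin q u
    have step3 : ∑ u, kpow K mxt z0 u * (if u = z then 0 else (1 - δ) ^ q)
        ≤ (1 - δ) ^ (q + 1) := by
      have e1 : ∀ u : Z, kpow K mxt z0 u * (if u = z then 0 else (1 - δ) ^ q)
          = kpow K mxt z0 u * (1 - δ) ^ q
            - (if u = z then kpow K mxt z0 u * (1 - δ) ^ q else 0) := by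
        intro u; split <;> ring
      rw [Finset.sum_congr rfl fun u _ => e1 u, Finset.sum_sub_distrib,
        Finset.sum_ite_eq' Finset.univ z, ← Finset.sum_mul, kpow_rowsum hK1,
        if_pos (Finset.mem_univ z), one_mul]
      have := hmin z0
      calc (1 - δ) ^ q - kpow K mxt z0 z * (1 - δ) ^ q
          ≤ (1 - δ) ^ q - δ * (1 - δ) ^ q := by nlinarith
        _ = (1 - δ) ^ (q + 1) := by ring
    linarith

end aux

set_option maxHeartbeats 1000000 in
/-- bias of the on-policy Monte Carlo estimator of the Q-function.
`Qpi` is the true Q-function of policy `π`; the expectation of the OMC estimator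
started at `z0`, computed via the strong Markov property at the truncated hitting time
of `z = (s,a)`, deviates from `Qpi z` by at most
`2(n+1)/(1-γ) * (γ^(n-1) + (1 - σ z / (2 t_mix z))^(n-1))`. -/
theorem omc_bias_bound {S A : Type*} [Fintype S] [Fintype A] [DecidableEq S] [DecidableEq A]
    (Pk : S → A → S → ℝ) (c : S → A → ℝ) (π : S → A → ℝ) (γ C ρ : ℝ)
    (hP0 : ∀ s a s', 0 ≤ Pk s a s') (hP1 : ∀ s a, ∑ s', Pk s a s' = 1)
    (hπ0 : ∀ s a, 0 ≤ π s a) (hπ1 : ∀ s, ∑ a, π s a = 1)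
    (hc0 : ∀ s a, 0 ≤ c s a) (hc1 : ∀ s a, c s a ≤ 1)
    (hγ0 : 0 < γ) (hγ1 : γ < 1)
    (hC : 0 < C) (hρ0 : 0 < ρ) (hρ1 : ρ < 1)
    (K : S × A → S × A → ℝ)
    (hK : ∀ z w, K z w = Pk z.1 z.2 w.1 * π w.1 w.2)
    (σ : S × A → ℝ)
    (hσ0 : ∀ z, 0 ≤ σ z) (hσ1 : ∑ z, σ z = 1)
    (hstat : ∀ z', ∑ z, σ z * K z z' = σ z')
    (hmix : ∀ (t : ℕ) (z0 : S × A), ∑ z', |kpow K t z0 z' - σ z'| ≤ C * ρ ^ t)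
    (Qpi : S × A → ℝ)
    (hQ : ∀ z, Qpi z = ∑' t : ℕ, γ ^ t * ∑ w, kpow K t z w * c w.1 w.2)
    (s : S) (a : A) (hσz : 0 < σ (s, a))
    (tmix : ℕ) (htmix : tmix = ⌈Real.log (σ (s, a) / (2 * C)) / Real.log ρ⌉₊)
    (n : ℕ) (hn : 1 ≤ n) (z0 : S × A) :
    |(∑ i ∈ Finset.range n, hitProb K (s, a) i z0 *
        ∑ t ∈ Finset.range (n - i), γ ^ t * ∑ w, kpow K t (s, a) w * c w.1 w.2)
        - Qpi (s, a)|
      ≤ 2 * (n + 1) / (1 - γ) *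
        (γ ^ (n - 1) + (1 - σ (s, a) / (2 * tmix)) ^ (n - 1)) := by
  set z : S × A := (s, a) with hzdef
  have hK0 : ∀ u w, 0 ≤ K u w := fun u w => by
    rw [hK]; exact mul_nonneg (hP0 _ _ _) (hπ0 _ _)
  have hK1 : ∀ u : S × A, ∑ w, K u w = 1 := by
    intro u
    rw [Fintype.sum_prod_type]
    have : ∀ s' : S, ∑ a' : A, K u (s', a') = Pk u.1 u.2 s' := by
      intro s'
      simp_rw [hK]
      rw [← Finset.mul_sum, hπ1 s', mul_one]
    simp_rw [this]
    exact hP1 u.1 u.2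
  have hγle : (0:ℝ) ≤ γ := hγ0.le
  have h1γ : (0:ℝ) < 1 - γ := by linarith
  set f : ℕ → ℝ := fun t => γ ^ t * ∑ w, kpow K t z w * c w.1 w.2 with hfdef
  have hm0 : ∀ t, 0 ≤ ∑ w, kpow K t z w * c w.1 w.2 := fun t =>
    Finset.sum_nonneg fun w _ => mul_nonneg (kpow_nonneg hK0 t z w) (hc0 _ _)
  have hm1 : ∀ t, ∑ w, kpow K t z w * c w.1 w.2 ≤ 1 := by
    intro t
    calc ∑ w, kpow K t z w * c w.1 w.2 ≤ ∑ w, kpow K t z w * 1 :=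
          Finset.sum_le_sum fun w _ =>
            mul_le_mul_of_nonneg_left (hc1 _ _) (kpow_nonneg hK0 t z w)
      _ = 1 := by simp only [mul_one]; exact kpow_rowsum hK1 t z
  have hf0 : ∀ t, 0 ≤ f t := fun t => mul_nonneg (pow_nonneg hγle t) (hm0 t)
  have hfle : ∀ t, f t ≤ γ ^ t := by
    intro t
    have h1 := hm1 t
    have h2 : (0:ℝ) ≤ γ ^ t := pow_nonneg hγle t
    calc f t = γ ^ t * ∑ w, kpow K t z w * c w.1 w.2 := rfl
      _ ≤ γ ^ t * 1 := mul_le_mul_of_nonneg_left h1 h2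
      _ = γ ^ t := mul_one _
  have hgsum : Summable (fun t : ℕ => γ ^ t) := summable_geometric_of_lt_one hγle hγ1
  have hfsum : Summable f := hgsum.of_nonneg_of_le hf0 hfle
  have hQz : Qpi z = ∑' t, f t := hQ z
  have hQ0 : 0 ≤ Qpi z := by
    rw [hQz]; exact tsum_nonneg hf0
  have hQle : Qpi z ≤ (1 - γ)⁻¹ := by
    rw [hQz, ← tsum_geometric_of_lt_one hγle hγ1]
    exact Summable.tsum_le_tsum hfle hfsum hgsum
  have htail : ∀ k : ℕ, 0 ≤ Qpi z - ∑ t ∈ range k, f t ∧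
      Qpi z - ∑ t ∈ range k, f t ≤ γ ^ k * (1 - γ)⁻¹ := by
    intro k
    have hsplit : (∑ t ∈ range k, f t) + ∑' t, f (t + k) = ∑' t, f t :=
      Summable.sum_add_tsum_nat_add k hfsum
    have hshift : Summable fun t => f (t + k) := (summable_nat_add_iff k).mpr hfsum
    have hshiftg : Summable fun t : ℕ => γ ^ (t + k) := (summable_nat_add_iff k).mpr hgsum
    constructor
    · have : 0 ≤ ∑' t, f (t + k) := tsum_nonneg fun t => hf0 _
      rw [hQz]; linarith
    · have hb : ∑' t, f (t + k) ≤ ∑' t : ℕ, γ ^ (t + k) :=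
        Summable.tsum_le_tsum (fun t => hfle _) hshift hshiftg
      have hgeo : ∑' t : ℕ, γ ^ (t + k) = γ ^ k * (1 - γ)⁻¹ := by
        simp_rw [pow_add]
        rw [tsum_mul_right, tsum_geometric_of_lt_one hγle hγ1, mul_comm]
      rw [hQz]
      linarith [hgeo ▸ hb]
  -- hitting probabilities
  have hh0 : ∀ i, 0 ≤ hitProb K z i z0 := fun i => hitProb_nonneg hK0 i z0
  have hFle1 : ∀ (k : ℕ) (u : S × A), ∑ j ∈ range k, hitProb K z j u ≤ 1 :=
    hitF_le_one hK0 hK1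
  have hF0 : ∀ (k : ℕ) (u : S × A), 0 ≤ ∑ j ∈ range k, hitProb K z j u := fun k u =>
    Finset.sum_nonneg fun j _ => hitProb_nonneg hK0 j u
  have hhT : ∀ i, hitProb K z i z0 ≤ 1 - ∑ j ∈ range i, hitProb K z j z0 := by
    intro i
    have h1 := hFle1 (i + 1) z0
    rw [Finset.sum_range_succ] at h1
    linarith
  set E : ℝ := ∑ i ∈ range n, hitProb K z i z0 * ∑ t ∈ range (n - i), f t with hEdef
  show |E - Qpi z| ≤ 2 * (n + 1) / (1 - γ) *
    (γ ^ (n - 1) + (1 - σ z / (2 * tmix)) ^ (n - 1))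
  set β : ℝ := 1 - σ z / (2 * tmix) with hβdef
  -- master inequality
  have hE_le : E ≤ Qpi z := by
    calc E ≤ ∑ i ∈ range n, hitProb K z i z0 * Qpi z := by
          apply Finset.sum_le_sum
          intro i _
          exact mul_le_mul_of_nonneg_left (by linarith [(htail (n - i)).1]) (hh0 i)
      _ = (∑ i ∈ range n, hitProb K z i z0) * Qpi z := by rw [Finset.sum_mul]
      _ ≤ 1 * Qpi z := mul_le_mul_of_nonneg_right (hFle1 n z0) hQ0
      _ = Qpi z := one_mul _
  have habs : |E - Qpi z| = Qpi z - E := by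
    rw [abs_sub_comm, abs_of_nonneg (by linarith)]
  have hdecomp : Qpi z - E =
      (∑ i ∈ range n, hitProb K z i z0 * (Qpi z - ∑ t ∈ range (n - i), f t))
        + (1 - ∑ i ∈ range n, hitProb K z i z0) * Qpi z := by
    simp only [mul_sub, Finset.sum_sub_distrib, ← Finset.sum_mul]
    ring
  have hterm1 : ∑ i ∈ range n, hitProb K z i z0 * (Qpi z - ∑ t ∈ range (n - i), f t)
      ≤ (∑ i ∈ range n, hitProb K z i z0 * γ ^ (n - i)) * (1 - γ)⁻¹ := by
    rw [Finset.sum_mul]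
    apply Finset.sum_le_sum
    intro i _
    rw [mul_assoc]
    exact mul_le_mul_of_nonneg_left ((htail (n - i)).2) (hh0 i)
  have hterm2 : (1 - ∑ i ∈ range n, hitProb K z i z0) * Qpi z
      ≤ (1 - ∑ i ∈ range n, hitProb K z i z0) * (1 - γ)⁻¹ :=
    mul_le_mul_of_nonneg_left hQle (by linarith [hFle1 n z0])
  have master : |E - Qpi z| ≤
      ((∑ i ∈ range n, hitProb K z i z0 * γ ^ (n - i))
        + (1 - ∑ i ∈ range n, hitProb K z i z0)) * (1 - γ)⁻¹ := by
    rw [habs, hdecomp, add_mul]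
    linarith
  have hσle1 : σ z ≤ 1 := by
    calc σ z ≤ ∑ u, σ u := Finset.single_le_sum (fun u _ => hσ0 u) (Finset.mem_univ z)
      _ = 1 := hσ1
  -- bracket bound
  have hbracket : (∑ i ∈ range n, hitProb K z i z0 * γ ^ (n - i))
        + (1 - ∑ i ∈ range n, hitProb K z i z0)
      ≤ 2 * (n + 1) * (γ ^ (n - 1) + β ^ (n - 1)) := by
    rcases Nat.eq_zero_or_pos tmix with htm0 | htm
    · -- tmix = 0 : β = 1, trivial bound
      have hβ1 : β = 1 := by
        rw [hβdef, htm0]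
        norm_num
      have hs1 : ∑ i ∈ range n, hitProb K z i z0 * γ ^ (n - i) ≤ 1 := by
        calc ∑ i ∈ range n, hitProb K z i z0 * γ ^ (n - i)
            ≤ ∑ i ∈ range n, hitProb K z i z0 * 1 := Finset.sum_le_sum fun i _ =>
              mul_le_mul_of_nonneg_left (pow_le_one₀ hγle hγ1.le) (hh0 i)
          _ = ∑ i ∈ range n, hitProb K z i z0 := by simp
          _ ≤ 1 := hFle1 n z0
      have hs2 : 1 - ∑ i ∈ range n, hitProb K z i z0 ≤ 1 := by linarith [hF0 n z0]
      have hgpow : (0:ℝ) ≤ γ ^ (n - 1) := pow_nonneg hγle _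
      have hn1 : (1:ℝ) ≤ (n:ℝ) + 1 := by
        have : (0:ℝ) ≤ (n:ℝ) := Nat.cast_nonneg n
        linarith
      rw [hβ1, one_pow]
      nlinarith
    · -- tmix ≥ 1
      have htmR : (1:ℝ) ≤ (tmix:ℝ) := by exact_mod_cast htm
      have hlρ : Real.log ρ < 0 := Real.log_neg hρ0 hρ1
      have hx : 0 < σ z / (2 * C) := div_pos hσz (by linarith)
      have hL : Real.log (σ z / (2 * C)) / Real.log ρ ≤ (tmix:ℝ) := by
        rw [htmix]; exact Nat.le_ceil _
      have hlog : (tmix:ℝ) * Real.log ρ ≤ Real.log (σ z / (2 * C)) := by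
        have h2 := mul_le_mul_of_nonpos_right hL hlρ.le
        rwa [div_mul_cancel₀ _ (ne_of_lt hlρ)] at h2
      have hρt : ρ ^ tmix ≤ σ z / (2 * C) := by
        have h3 : Real.log (ρ ^ tmix) ≤ Real.log (σ z / (2 * C)) := by
          rw [Real.log_pow]; exact_mod_cast hlog
        have h4 := Real.exp_le_exp.mpr h3
        rwa [Real.exp_log (pow_pos hρ0 _), Real.exp_log hx] at h4
      have hCρ : C * ρ ^ tmix ≤ σ z / 2 := by
        calc C * ρ ^ tmix ≤ C * (σ z / (2 * C)) :=
            mul_le_mul_of_nonneg_left hρt hC.le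
          _ = σ z / 2 := by field_simp
      have hmin : ∀ u : S × A, σ z / 2 ≤ kpow K tmix u z := by
        intro u
        have h1 : |kpow K tmix u z - σ z| ≤ C * ρ ^ tmix := by
          calc |kpow K tmix u z - σ z| ≤ ∑ z', |kpow K tmix u z' - σ z'| :=
              Finset.single_le_sum (f := fun z' => |kpow K tmix u z' - σ z'|)
                (fun _ _ => abs_nonneg _) (Finset.mem_univ z)
            _ ≤ C * ρ ^ tmix := hmix tmix u
        have h2 := (abs_le.mp h1).1
        linarith
      have hδ0 : (0:ℝ) ≤ σ z / 2 := by linarith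
      have hdecay := tail_decay (z := z) hK0 hK1 tmix hδ0 hmin
      -- β facts
      have hhalf : σ z / (2 * (tmix:ℝ)) ≤ 1 / 2 := by
        rw [div_le_div_iff₀ (by positivity) (by norm_num)]
        nlinarith
      have hβpos : (0:ℝ) < β := by
        rw [hβdef]; linarith
      have hβle1 : β ≤ 1 := by
        rw [hβdef]
        have : 0 ≤ σ z / (2 * tmix) := by positivity
        linarith
      have hBern : 1 - σ z / 2 ≤ β ^ tmix := by
        have hb := one_add_mul_le_pow (a := -(σ z / (2 * (tmix:ℝ))))
          (by linarith) tmix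
        have he : 1 + (tmix:ℝ) * -(σ z / (2 * tmix)) = 1 - σ z / 2 := by
          field_simp
          ring
        calc 1 - σ z / 2 = 1 + (tmix:ℝ) * -(σ z / (2 * tmix)) := he.symm
          _ ≤ (1 + -(σ z / (2 * tmix))) ^ tmix := hb
          _ = β ^ tmix := by rw [hβdef, sub_eq_add_neg]
      have hβthalf : (1:ℝ) / 2 ≤ β ^ tmix := by linarith
      -- tail bound: T i ≤ 2 β^i
      have hT2 : ∀ (i : ℕ) (u : S × A),
          1 - ∑ j ∈ range i, hitProb K z j u ≤ 2 * β ^ i := by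
        intro i u
        rcases Nat.eq_zero_or_pos i with rfl | hi
        · simp only [range_zero, Finset.sum_empty, sub_zero, pow_zero, mul_one]
          norm_num
        · set q := (i - 1) / tmix with hq
          have hipred : i - 1 + 1 = i := Nat.succ_pred_eq_of_pos hi
          have hq1 : q * tmix + 1 ≤ i := by
            have h6 : q * tmix ≤ i - 1 := Nat.div_mul_le_self (i - 1) tmix
            calc q * tmix + 1 ≤ (i - 1) + 1 := Nat.add_le_add_right h6 1
              _ = i := hipred
          have hq2 : i ≤ q * tmix + tmix := by
            have h6 : i - 1 < q * tmix + tmix := by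
              calc i - 1 = tmix * q + (i - 1) % tmix := (Nat.div_add_mod (i - 1) tmix).symm
                _ < tmix * q + tmix := Nat.add_lt_add_left (Nat.mod_lt _ htm) _
                _ = q * tmix + tmix := by rw [Nat.mul_comm]
            calc i = (i - 1) + 1 := hipred.symm
              _ ≤ q * tmix + tmix := Nat.succ_le_of_lt h6
          have hmono : ∑ j ∈ range (q * tmix + 1), hitProb K z j u
              ≤ ∑ j ∈ range i, hitProb K z j u := by
            apply Finset.sum_le_sum_of_subset_of_nonneg
            · exact Finset.range_subset_range.mpr hq1
            · intro j _ _; exact hitProb_nonneg hK0 j u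
          have hd := hdecay q u
          have hpp : (1 - σ z / 2) ^ q ≤ (β ^ tmix) ^ q :=
            pow_le_pow_left₀ (by linarith) hBern q
          have hbq : (β ^ tmix) ^ q = β ^ (q * tmix) := by
            rw [← pow_mul, Nat.mul_comm]
          have hfin : β ^ (q * tmix) ≤ 2 * β ^ i := by
            have h1 : β ^ (q * tmix + tmix) ≤ β ^ i :=
              pow_le_pow_of_le_one hβpos.le hβle1 hq2
            have h2 : β ^ (q * tmix + tmix) = β ^ (q * tmix) * β ^ tmix := pow_add β _ _
            nlinarith [pow_nonneg hβpos.le (q * tmix)]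
          calc 1 - ∑ j ∈ range i, hitProb K z j u
              ≤ 1 - ∑ j ∈ range (q * tmix + 1), hitProb K z j u := by linarith
            _ ≤ (1 - σ z / 2) ^ q := hd
            _ ≤ (β ^ tmix) ^ q := hpp
            _ = β ^ (q * tmix) := hbq
            _ ≤ 2 * β ^ i := hfin
      -- per-term bound
      have hB0 : (0:ℝ) ≤ γ ^ (n - 1) + β ^ (n - 1) := by positivity
      have hmixpow : ∀ i < n, β ^ i * γ ^ (n - i) ≤ γ ^ (n - 1) + β ^ (n - 1) := by
        intro i hi
        have hin : i + (n - i) = n := by omega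
        rcases le_total β γ with hbg | hgb
        · have h1 : β ^ i ≤ γ ^ i := pow_le_pow_left₀ hβpos.le hbg i
          have h2 : β ^ i * γ ^ (n - i) ≤ γ ^ i * γ ^ (n - i) :=
            mul_le_mul_of_nonneg_right h1 (pow_nonneg hγle _)
          have h3 : γ ^ i * γ ^ (n - i) = γ ^ n := by rw [← pow_add, hin]
          have h4 : γ ^ n ≤ γ ^ (n - 1) := pow_le_pow_of_le_one hγle hγ1.le (by omega)
          have h5 : (0:ℝ) ≤ β ^ (n - 1) := pow_nonneg hβpos.le _
          linarith
        · have h1 : γ ^ (n - i) ≤ β ^ (n - i) := pow_le_pow_left₀ hγle hgb _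
          have h2 : β ^ i * γ ^ (n - i) ≤ β ^ i * β ^ (n - i) :=
            mul_le_mul_of_nonneg_left h1 (pow_nonneg hβpos.le _)
          have h3 : β ^ i * β ^ (n - i) = β ^ n := by rw [← pow_add, hin]
          have h4 : β ^ n ≤ β ^ (n - 1) := pow_le_pow_of_le_one hβpos.le hβle1 (by omega)
          have h5 : (0:ℝ) ≤ γ ^ (n - 1) := pow_nonneg hγle _
          linarith
      have hsum1 : ∑ i ∈ range n, hitProb K z i z0 * γ ^ (n - i)
          ≤ (n:ℝ) * (2 * (γ ^ (n - 1) + β ^ (n - 1))) := by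
        have : ∀ i ∈ range n, hitProb K z i z0 * γ ^ (n - i)
            ≤ 2 * (γ ^ (n - 1) + β ^ (n - 1)) := by
          intro i hi
          have hi' := Finset.mem_range.mp hi
          have ht := le_trans (hhT i) (hT2 i z0)
          have hg : (0:ℝ) ≤ γ ^ (n - i) := pow_nonneg hγle _
          calc hitProb K z i z0 * γ ^ (n - i) ≤ 2 * β ^ i * γ ^ (n - i) :=
              mul_le_mul_of_nonneg_right ht hg
            _ = 2 * (β ^ i * γ ^ (n - i)) := by ring
            _ ≤ 2 * (γ ^ (n - 1) + β ^ (n - 1)) := by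
                have := hmixpow i hi'
                linarith
        calc ∑ i ∈ range n, hitProb K z i z0 * γ ^ (n - i)
            ≤ ∑ _i ∈ range n, 2 * (γ ^ (n - 1) + β ^ (n - 1)) :=
              Finset.sum_le_sum this
          _ = (n:ℝ) * (2 * (γ ^ (n - 1) + β ^ (n - 1))) := by
              rw [Finset.sum_const, Finset.card_range, nsmul_eq_mul]
      have hsum2 : 1 - ∑ i ∈ range n, hitProb K z i z0
          ≤ 2 * (γ ^ (n - 1) + β ^ (n - 1)) := by
        have h1 := hT2 n z0
        have h2 : β ^ n ≤ β ^ (n - 1) := pow_le_pow_of_le_one hβpos.le hβle1 (by omega)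
        have h3 : (0:ℝ) ≤ γ ^ (n - 1) := pow_nonneg hγle _
        linarith
      nlinarith [hsum1, hsum2]
  -- conclude
  have hinv : (0:ℝ) < (1 - γ)⁻¹ := by positivity
  calc |E - Qpi z| ≤ ((∑ i ∈ range n, hitProb K z i z0 * γ ^ (n - i))
        + (1 - ∑ i ∈ range n, hitProb K z i z0)) * (1 - γ)⁻¹ := master
    _ ≤ (2 * (n + 1) * (γ ^ (n - 1) + β ^ (n - 1))) * (1 - γ)⁻¹ :=
        mul_le_mul_of_nonneg_right hbracket hinv.le
    _ = 2 * (n + 1) / (1 - γ) * (γ ^ (n - 1) + β ^ (n - 1)) := by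
        field_simp
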